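/- Let a < 0, λ > 0, α > 0 with λ/((−a)α) < 1, and F(x, u) = (λ/(−a)) ∫₀^∞ e^{−α y} (1 + y/x)^u dy for x > 0. Then for each u ≥ 1 there is a unique x = φ(u) ∈ (0, ∞) with F(φ(u), u) = 1, and the resulting function φ : [1, ∞) → (0, ∞) is strictly increasing. -/

import Mathlib

open MeasureTheory Set Real

private lemma my_cont_f {alpha : ℝ} (u : ℝ) (hu : 0 ≤ u) (x : ℝ) :
    Continuous (fun y : ℝ => Real.exp (-alpha * y) * (1 + y / x) ^ u) := by
  refine Continuous.mul (Real.continuous_exp.comp (continuous_const.mul continuous_id)) ?_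
  exact (continuous_const.add (continuous_id.div_const x)).rpow_const (fun y => Or.inr hu)

private lemma my_rpow_exp_int {alpha : ℝ} (halpha : 0 < alpha) {u : ℝ} (hu : -1 < u) :
    IntegrableOn (fun y : ℝ => y ^ u * Real.exp (-alpha * y)) (Set.Ioi 0) := by
  have h := integrableOn_rpow_mul_exp_neg_mul_rpow hu one_pos halpha
  refine h.congr_fun (fun y hy => ?_) measurableSet_Ioi
  simp only [Real.rpow_one]

private lemma my_main_int {alpha : ℝ} (halpha : 0 < alpha) {x u : ℝ} (hx : 0 < x) (hu : 0 ≤ u) :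
    IntegrableOn (fun y : ℝ => Real.exp (-alpha * y) * (1 + y / x) ^ u) (Set.Ioi 0) := by
  have hg : IntegrableOn
      (fun y : ℝ => ((1 + 1 / x) ^ u * 2 ^ u) *
        (Real.exp (-alpha * y) + y ^ u * Real.exp (-alpha * y))) (Set.Ioi 0) :=
    ((exp_neg_integrableOn_Ioi 0 halpha).add (my_rpow_exp_int halpha (by linarith))).const_mul _
  refine hg.mono' ((my_cont_f u hu x).aestronglyMeasurable.restrict) ?_
  filter_upwards [ae_restrict_mem measurableSet_Ioi] with y hy
  have hy0 : 0 < y := hy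
  have h1 : (0:ℝ) ≤ 1 + y / x := by positivity
  have hb : (0:ℝ) ≤ (1 + 1/x) ^ u := Real.rpow_nonneg (by positivity) u
  rw [Real.norm_eq_abs, abs_of_nonneg (mul_nonneg (Real.exp_pos _).le (Real.rpow_nonneg h1 u))]
  have step1 : (1 + y / x) ^ u ≤ ((1 + 1/x) * (1 + y)) ^ u := by
    refine Real.rpow_le_rpow h1 ?_ hu
    have hxx : 0 < 1 / x := by positivity
    have hexp : (1 + 1/x) * (1 + y) = 1 + y / x + (y + 1/x) := by field_simp; ring
    linarith
  have step2 : ((1 + 1/x) * (1 + y)) ^ u = (1 + 1/x) ^ u * (1 + y) ^ u :=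
    Real.mul_rpow (by positivity) (by positivity)
  have step3 : (1 + y) ^ u ≤ 2 ^ u * (1 + y ^ u) := by
    have hyu : (0:ℝ) ≤ y ^ u := Real.rpow_nonneg hy0.le u
    rcases le_total y 1 with h | h
    · have : (1 + y) ^ u ≤ (2:ℝ) ^ u := Real.rpow_le_rpow (by linarith) (by linarith) hu
      nlinarith [Real.rpow_nonneg (show (0:ℝ) ≤ 2 by norm_num) u]
    · have h2 : (1 + y) ^ u ≤ (2 * y) ^ u := Real.rpow_le_rpow (by linarith) (by linarith) hu
      have h3 : ((2:ℝ) * y) ^ u = 2 ^ u * y ^ u := Real.mul_rpow (by norm_num) hy0.le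
      nlinarith [Real.rpow_nonneg (show (0:ℝ) ≤ 2 by norm_num) u]
  have key : (1 + y / x) ^ u ≤ (1 + 1/x) ^ u * (2 ^ u * (1 + y ^ u)) := by
    calc (1 + y / x) ^ u ≤ (1 + 1/x) ^ u * (1 + y) ^ u := by rw [← step2]; exact step1
    _ ≤ (1 + 1/x) ^ u * (2 ^ u * (1 + y ^ u)) := by
        exact mul_le_mul_of_nonneg_left step3 hb
  have := mul_le_mul_of_nonneg_left key (Real.exp_pos (-alpha * y)).le
  calc Real.exp (-alpha * y) * (1 + y / x) ^ u
      ≤ Real.exp (-alpha * y) * ((1 + 1/x) ^ u * (2 ^ u * (1 + y ^ u))) := this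
    _ = ((1 + 1 / x) ^ u * 2 ^ u) * (Real.exp (-alpha * y) + y ^ u * Real.exp (-alpha * y)) := by
        ring

private lemma my_sub_int_pos {f g : ℝ → ℝ}
    (hf : IntegrableOn f (Set.Ioi 0)) (hg : IntegrableOn g (Set.Ioi 0))
    (h : ∀ y ∈ Set.Ioi (0:ℝ), f y < g y) :
    (∫ y in Set.Ioi (0:ℝ), f y) < ∫ y in Set.Ioi (0:ℝ), g y := by
  have h0 : 0 < ∫ y in Set.Ioi (0:ℝ), (g y - f y) := by
    have hint : IntegrableOn (fun y => g y - f y) (Set.Ioi 0) := hg.sub hf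
    rw [setIntegral_pos_iff_support_of_nonneg_ae ?_ hint]
    · refine lt_of_lt_of_le ?_ (measure_mono (fun y hy =>
        ⟨(sub_pos.mpr (h y hy)).ne', hy⟩))
      rw [Real.volume_Ioi]
      exact ENNReal.zero_lt_top
    · filter_upwards [ae_restrict_mem measurableSet_Ioi] with y hy
      exact sub_nonneg.mpr (h y hy).le
  have heq : (∫ y in Set.Ioi (0:ℝ), (g y - f y)) =
      (∫ y in Set.Ioi (0:ℝ), g y) - ∫ y in Set.Ioi (0:ℝ), f y := integral_sub hg hf
  linarith

private lemma my_G_contOn {alpha : ℝ} (halpha : 0 < alpha) {u : ℝ} (hu : 0 ≤ u) :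
    ContinuousOn (fun x => ∫ y in Set.Ioi (0:ℝ),
      Real.exp (-alpha * y) * (1 + y / x) ^ u) (Set.Ioi 0) := by
  intro x0 hx0
  have hx0' : (0:ℝ) < x0 := hx0
  apply ContinuousAt.continuousWithinAt
  apply MeasureTheory.continuousAt_of_dominated
    (bound := fun y => Real.exp (-alpha * y) * (1 + y / (x0/2)) ^ u)
  · filter_upwards with x using (my_cont_f u hu x).aestronglyMeasurable.restrict
  · have hev : ∀ᶠ x in nhds x0, x ∈ Set.Ioi (x0/2) :=
      isOpen_Ioi.mem_nhds (by simpa using half_lt_self hx0')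
    filter_upwards [hev] with x hx
    filter_upwards [ae_restrict_mem measurableSet_Ioi] with y hy
    have hy0 : 0 < y := hy
    have hx' : 0 < x := lt_trans (by positivity) hx
    have h1 : (0:ℝ) ≤ 1 + y / x := by positivity
    rw [Real.norm_eq_abs, abs_of_nonneg (mul_nonneg (Real.exp_pos _).le (Real.rpow_nonneg h1 u))]
    refine mul_le_mul_of_nonneg_left (Real.rpow_le_rpow h1 ?_ hu) (Real.exp_pos _).le
    have : y / x ≤ y / (x0/2) := by
      apply div_le_div_of_nonneg_left hy0.le (by positivity) (le_of_lt hx)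
    linarith
  · exact my_main_int halpha (by positivity) hu
  · filter_upwards [ae_restrict_mem measurableSet_Ioi] with y hy
    have hy0 : 0 < y := hy
    refine ContinuousAt.mul continuousAt_const ?_
    refine ContinuousAt.rpow_const ?_ (Or.inr hu)
    exact continuousAt_const.add (continuousAt_const.div continuousAt_id hx0'.ne')

private lemma my_exp_integral {b : ℝ} (hb : 0 < b) :
    (∫ y in Set.Ioi (0:ℝ), Real.exp (-b * y)) = 1 / b := by
  have h := integral_comp_mul_left_Ioi (fun t => Real.exp (-t)) 0 hb
  simp only [mul_zero, integral_exp_neg_Ioi_zero, smul_eq_mul, mul_one] at h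
  rw [show (fun y => Real.exp (-b * y)) = fun y => Real.exp (-(b * y)) by
    funext y; rw [neg_mul]]
  rw [h, one_div]

theorem phi_exists_unique_strict_mono
    (a lam alpha : ℝ)
    (ha : a < 0) (hlam : 0 < lam) (halpha : 0 < alpha)
    (hsub : lam / (-a * alpha) < 1)
    (F : ℝ → ℝ → ℝ)
    (hF : ∀ x u : ℝ, 0 < x → 0 ≤ u →
      F x u = lam / (-a) * ∫ y in Set.Ioi (0:ℝ), Real.exp (-alpha * y) * (1 + y / x) ^ u) :
    (∀ u : ℝ, 1 ≤ u → ∃! x : ℝ, x ∈ Set.Ioi (0:ℝ) ∧ F x u = 1) ∧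
    (∀ φ : ℝ → ℝ, (∀ u : ℝ, 1 ≤ u → φ u ∈ Set.Ioi (0:ℝ) ∧ F (φ u) u = 1) →
      StrictMonoOn φ (Set.Ici 1)) := by
  have hna : 0 < -a := by linarith
  have hconst : 0 < lam / (-a) := by positivity
  have hlt : lam / (-a) < alpha := by
    rw [div_lt_iff₀ hna]
    have := (div_lt_one (by positivity : 0 < -a * alpha)).mp hsub
    linarith [this]
  set G : ℝ → ℝ → ℝ :=
    fun x u => ∫ y in Set.Ioi (0:ℝ), Real.exp (-alpha * y) * (1 + y / x) ^ u with hG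
  -- strict antitonicity in x
  have hanti : ∀ u : ℝ, 1 ≤ u → ∀ x1 x2 : ℝ, 0 < x1 → x1 < x2 → F x2 u < F x1 u := by
    intro u hu x1 x2 hx1 h12
    have hx2 : 0 < x2 := lt_trans hx1 h12
    have hu0 : (0:ℝ) ≤ u := by linarith
    rw [hF x1 u hx1 hu0, hF x2 u hx2 hu0]
    refine mul_lt_mul_of_pos_left ?_ hconst
    refine my_sub_int_pos (my_main_int halpha hx2 hu0) (my_main_int halpha hx1 hu0) ?_
    intro y hy
    have hy0 : 0 < y := hy
    refine mul_lt_mul_of_pos_left ?_ (Real.exp_pos _)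
    refine Real.rpow_lt_rpow (by positivity) ?_ (by linarith)
    have : y / x2 < y / x1 := div_lt_div_of_pos_left hy0 hx1 h12
    linarith
  -- strict monotonicity in u
  have hmonu : ∀ x : ℝ, 0 < x → ∀ u v : ℝ, 0 ≤ u → u < v → F x u < F x v := by
    intro x hx u v hu huv
    rw [hF x u hx hu, hF x v hx (by linarith)]
    refine mul_lt_mul_of_pos_left ?_ hconst
    refine my_sub_int_pos (my_main_int halpha hx hu) (my_main_int halpha hx (by linarith)) ?_
    intro y hy
    have hy0 : 0 < y := hy
    refine mul_lt_mul_of_pos_left ?_ (Real.exp_pos _)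
    refine Real.rpow_lt_rpow_of_exponent_lt ?_ huv
    have : 0 < y / x := by positivity
    linarith
  -- value of c = ∫ y * exp(-αy)
  have hc_int : IntegrableOn (fun y : ℝ => y * Real.exp (-alpha * y)) (Set.Ioi 0) := by
    have h := my_rpow_exp_int halpha (show (-1:ℝ) < 1 by norm_num)
    refine h.congr_fun (fun y hy => ?_) measurableSet_Ioi
    simp only [Real.rpow_one]
  set c : ℝ := ∫ y in Set.Ioi (0:ℝ), y * Real.exp (-alpha * y) with hc
  have hc_pos : 0 < c := by
    rw [hc]
    have hz : IntegrableOn (fun _ : ℝ => (0:ℝ)) (Set.Ioi 0) := (integrableOn_const_iff (by simp)).mpr (Or.inl (by simp))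
    have := my_sub_int_pos hz hc_int ?_
    · simpa using this
    · intro y hy
      have hy0 : 0 < y := hy
      positivity
  -- lower bound for F at small x
  have hlow : ∀ u : ℝ, 1 ≤ u → ∀ x : ℝ, 0 < x → lam / (-a) * (c / x) ≤ F x u := by
    intro u hu x hx
    rw [hF x u hx (by linarith)]
    have hmono : (∫ y in Set.Ioi (0:ℝ), (1/x) * (y * Real.exp (-alpha * y)))
        ≤ ∫ y in Set.Ioi (0:ℝ), Real.exp (-alpha * y) * (1 + y / x) ^ u := by
      refine setIntegral_mono_on (hc_int.const_mul _) (my_main_int halpha hx (by linarith))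
        measurableSet_Ioi ?_
      intro y hy
      have hy0 : 0 < y := hy
      have h1 : (1:ℝ) ≤ 1 + y / x := by
        have : 0 < y / x := by positivity
        linarith
      have h2 : y / x ≤ (1 + y / x) ^ u := by
        calc y / x ≤ 1 + y / x := by linarith
          _ = (1 + y / x) ^ (1:ℝ) := (Real.rpow_one _).symm
          _ ≤ (1 + y / x) ^ u := Real.rpow_le_rpow_of_exponent_le h1 hu
      calc (1/x) * (y * Real.exp (-alpha * y)) = Real.exp (-alpha * y) * (y / x) := by ring
        _ ≤ Real.exp (-alpha * y) * (1 + y / x) ^ u :=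
            mul_le_mul_of_nonneg_left h2 (Real.exp_pos _).le
    have hval : (∫ y in Set.Ioi (0:ℝ), (1/x) * (y * Real.exp (-alpha * y))) = c / x := by
      rw [integral_const_mul, ← hc]; ring
    rw [hval] at hmono
    exact mul_le_mul_of_nonneg_left hmono hconst.le
  -- upper bound for F at large x
  have hup : ∀ u : ℝ, 1 ≤ u → ∀ x : ℝ, 0 < x → u / x < alpha - lam / (-a) →
      F x u < 1 := by
    intro u hu x hx hdel
    have hu0 : (0:ℝ) ≤ u := by linarith
    have hbpos : 0 < alpha - u / x := by
      have : 0 ≤ lam / (-a) := hconst.le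
      linarith
    have hbd : (∫ y in Set.Ioi (0:ℝ), Real.exp (-alpha * y) * (1 + y / x) ^ u)
        ≤ ∫ y in Set.Ioi (0:ℝ), Real.exp (-(alpha - u / x) * y) := by
      refine setIntegral_mono_on (my_main_int halpha hx hu0)
        (exp_neg_integrableOn_Ioi 0 hbpos) measurableSet_Ioi ?_
      intro y hy
      have hy0 : 0 < y := hy
      have h1 : (0:ℝ) ≤ 1 + y / x := by positivity
      have h2 : (1 + y / x) ^ u ≤ Real.exp (y / x) ^ u :=
        Real.rpow_le_rpow h1 (by linarith [Real.add_one_le_exp (y/x)]) hu0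
      have h3 : Real.exp (y / x) ^ u = Real.exp (y / x * u) := (Real.exp_mul _ _).symm
      calc Real.exp (-alpha * y) * (1 + y / x) ^ u
          ≤ Real.exp (-alpha * y) * Real.exp (y / x * u) := by
            rw [← h3]; exact mul_le_mul_of_nonneg_left h2 (Real.exp_pos _).le
        _ = Real.exp (-(alpha - u / x) * y) := by
            rw [← Real.exp_add]; ring_nf
    rw [hF x u hx hu0]
    refine lt_of_le_of_lt (mul_le_mul_of_nonneg_left hbd hconst.le) ?_
    rw [my_exp_integral hbpos, mul_one_div, div_lt_one hbpos]
    linarith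
  -- existence for each u
  have hexists : ∀ u : ℝ, 1 ≤ u → ∃ x : ℝ, 0 < x ∧ F x u = 1 := by
    intro u hu
    have hu0 : (0:ℝ) ≤ u := by linarith
    -- small point
    set xl : ℝ := lam * c / (-a) / 2 with hxl
    have hxl0 : 0 < xl := by positivity
    have hFl : 2 ≤ F xl u := by
      have := hlow u hu xl hxl0
      have hval : lam / (-a) * (c / xl) = 2 := by
        have h1 : lam ≠ 0 := hlam.ne'
        have h2 : c ≠ 0 := hc_pos.ne'
        have h3 : a ≠ 0 := ha.ne
        rw [hxl]; field_simp
      linarith [this, hval]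
    -- large point
    have hdel : 0 < alpha - lam / (-a) := by linarith
    set xh : ℝ := max (xl + 1) (u / (alpha - lam / (-a)) + 1) with hxh
    have hxh0 : 0 < xh := lt_of_lt_of_le (by linarith) (le_max_left _ _)
    have hxhl : xl < xh := lt_of_lt_of_le (by linarith) (le_max_left _ _)
    have hFh : F xh u < 1 := by
      refine hup u hu xh hxh0 ?_
      rw [div_lt_iff₀ hxh0]
      have h1 : u / (alpha - lam / (-a)) + 1 ≤ xh := le_max_right _ _
      have h2 : u / (alpha - lam / (-a)) < xh := by linarith
      have h3 : u < xh * (alpha - lam / (-a)) := (div_lt_iff₀ hdel).mp h2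
      nlinarith [h3]
    -- IVT
    have hcontF : ContinuousOn (fun x => F x u) (Set.Icc xl xh) := by
      have hsub' : Set.Icc xl xh ⊆ Set.Ioi (0:ℝ) := fun z hz => lt_of_lt_of_le hxl0 hz.1
      refine ContinuousOn.congr
        (f := fun x => lam / (-a) * ∫ y in Set.Ioi (0:ℝ),
          Real.exp (-alpha * y) * (1 + y / x) ^ u)
        ((continuousOn_const.mul ((my_G_contOn halpha hu0).mono hsub'))) ?_
      intro z hz
      exact hF z u (hsub' hz) hu0
    have hmem : (1:ℝ) ∈ Set.Icc (F xh u) (F xl u) := ⟨hFh.le, by linarith⟩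
    obtain ⟨x, hxmem, hxval⟩ := intermediate_value_Icc' hxhl.le hcontF hmem
    exact ⟨x, lt_of_lt_of_le hxl0 hxmem.1, hxval⟩
  constructor
  · intro u hu
    obtain ⟨x, hx0, hx1⟩ := hexists u hu
    refine ⟨x, ⟨hx0, hx1⟩, ?_⟩
    rintro x' ⟨hx'0, hx'1⟩
    rcases lt_trichotomy x' x with h | h | h
    · have := hanti u hu x' x hx'0 h
      rw [hx1, hx'1] at this; linarith
    · exact h
    · have := hanti u hu x x' hx0 h
      rw [hx1, hx'1] at this; linarith
  · intro φ hφ u hu v hv huv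
    have hu' : (1:ℝ) ≤ u := hu
    have hv' : (1:ℝ) ≤ v := hv
    obtain ⟨hφu0, hφu1⟩ := hφ u hu'
    obtain ⟨hφv0, hφv1⟩ := hφ v hv'
    have h1 : F (φ v) u < F (φ v) v := hmonu (φ v) hφv0 u v (by linarith) huv
    by_contra hle
    push_neg at hle
    rcases eq_or_lt_of_le hle with h | h
    · rw [← h] at hφu1
      rw [hφv1, hφu1] at h1
      exact lt_irrefl _ h1
    · have := hanti u hu' (φ v) (φ u) hφv0 h
      rw [hφu1] at this
      rw [hφv1] at h1
      linarith
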